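/- Let P be a bounded idempotent operator (P² = P) on a complex Hilbert space with P ≠ 0, and let A = P − P*. Then ‖A‖² = ‖P‖² − 1. -/

import Mathlib

open ContinuousLinearMap

set_option linter.unusedSectionVars false

namespace NormSkewAux

variable {H : Type*} [NormedAddCommGroup H] [InnerProductSpace ℂ H] [CompleteSpace H]

local notation "⟪" x ", " y "⟫" => @inner ℂ _ _ x y

variable (P : H →L[ℂ] H)

lemma apply_apply (hP : P ∘L P = P) (x : H) : P (P x) = P x :=
  DFunLike.congr_fun hP x

/-- `ran P* ⊥ ran (1-P)`. -/
lemma horth (hP : P ∘L P = P) (x y : H) : ⟪adjoint P x, y - P y⟫ = 0 := by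
  rw [adjoint_inner_left, map_sub, apply_apply P hP, sub_self, inner_zero_right]

/-- if `P* w = 0` then `⟪w, P w⟫ = 0`. -/
lemma horth2 (w : H) (hw : adjoint P w = 0) : ⟪w, P w⟫ = 0 := by
  have h := adjoint_inner_right P w w
  rw [hw, inner_zero_right] at h
  rw [← inner_conj_symm, ← h, map_zero]

/-- `‖Bx‖² = ‖P*x‖² + ‖x - Px‖²` with `B = P + P* - 1`. -/
lemma I2 (hP : P ∘L P = P) (x : H) :
    ‖(P + adjoint P - 1) x‖ ^ 2 = ‖adjoint P x‖ ^ 2 + ‖x - P x‖ ^ 2 := by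
  have h : (P + adjoint P - 1) x = adjoint P x - (x - P x) := by
    simp only [sub_apply, add_apply, one_apply]
    abel
  rw [h, @norm_sub_sq ℂ, horth P hP]
  simp

/-- `‖Bx‖² = ‖x‖² + ‖Ax‖²` with `A = P - P*`. -/
lemma I1 (hP : P ∘L P = P) (x : H) :
    ‖(P + adjoint P - 1) x‖ ^ 2 = ‖x‖ ^ 2 + ‖(P - adjoint P) x‖ ^ 2 := by
  have h : x - (P - adjoint P) x = adjoint P x + (x - P x) := by
    simp only [sub_apply]
    abel
  have h2 : ‖x - (P - adjoint P) x‖ ^ 2 = ‖adjoint P x‖ ^ 2 + ‖x - P x‖ ^ 2 := by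
    rw [h, @norm_add_sq ℂ, horth P hP]
    simp
  have h3 : RCLike.re ⟪x, (P - adjoint P) x⟫ = 0 := by
    have heq : ⟪x, (P - adjoint P) x⟫ = ⟪x, P x⟫ - ⟪P x, x⟫ := by
      rw [sub_apply, inner_sub_right, adjoint_inner_right]
    have hre : RCLike.re ⟪P x, x⟫ = RCLike.re ⟪x, P x⟫ := inner_re_symm _ _
    rw [heq, map_sub, hre, sub_self]
  have h4 := @norm_sub_sq ℂ _ _ _ _ x ((P - adjoint P) x)
  rw [h3] at h4
  rw [I2 P hP, ← h2, h4]
  ring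

lemma one_le_norm (hP : P ∘L P = P) (hP0 : P ≠ 0) : 1 ≤ ‖P‖ := by
  have h : ‖P‖ ≤ ‖P‖ * ‖P‖ := by
    calc ‖P‖ = ‖P ∘L P‖ := by rw [hP]
    _ ≤ ‖P‖ * ‖P‖ := opNorm_comp_le P P
  have hpos : 0 < ‖P‖ := norm_pos_iff.mpr hP0
  nlinarith

/-- Key: for `w ∈ ker P*`, `‖w‖² + ‖Pw‖² ≤ ‖P‖² ‖w‖²`. -/
lemma key (hP : P ∘L P = P) (hP0 : P ≠ 0) (w : H) (hw : adjoint P w = 0) :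
    ‖w‖ ^ 2 + ‖P w‖ ^ 2 ≤ ‖P‖ ^ 2 * ‖w‖ ^ 2 := by
  by_cases hPw : P w = 0
  · rw [hPw, norm_zero]
    have h1 : (1:ℝ) ≤ ‖P‖ := one_le_norm P hP hP0
    have h2 : (1:ℝ) ≤ ‖P‖ ^ 2 := by nlinarith
    nlinarith [sq_nonneg ‖w‖]
  · have hcpos : 0 < ‖P w‖ := norm_pos_iff.mpr hPw
    have hrpos : 0 < ‖w‖ := by
      by_contra h
      push_neg at h
      have hw0 : w = 0 := norm_eq_zero.mp (le_antisymm h (norm_nonneg w))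
      exact hPw (by rw [hw0, map_zero])
    set t : ℝ := ‖w‖ ^ 2 / ‖P w‖ ^ 2 with ht
    have htpos : 0 < t := by positivity
    have ho2 : ⟪w, P w⟫ = 0 := horth2 P w hw
    have hsm : ‖(t : ℂ) • P w‖ = t * ‖P w‖ := by
      rw [norm_smul, Complex.norm_real, Real.norm_eq_abs, abs_of_pos htpos]
    have hxnorm : ‖w + (t : ℂ) • P w‖ ^ 2 = ‖w‖ ^ 2 + t ^ 2 * ‖P w‖ ^ 2 := by
      rw [@norm_add_sq ℂ, inner_smul_right, ho2, mul_zero, hsm]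
      simp
      ring
    have hPx : P (w + (t : ℂ) • P w) = ((1 + t : ℝ) : ℂ) • P w := by
      rw [map_add, map_smul, apply_apply P hP]
      push_cast
      rw [add_smul, one_smul]
    have hPxnorm : ‖P (w + (t : ℂ) • P w)‖ = (1 + t) * ‖P w‖ := by
      rw [hPx, norm_smul, Complex.norm_real, Real.norm_eq_abs, abs_of_pos (by positivity : (0:ℝ) < 1 + t)]
    have hb := P.le_opNorm (w + (t : ℂ) • P w)
    rw [hPxnorm] at hb
    have hb2 : ((1 + t) * ‖P w‖) ^ 2 ≤ ‖P‖ ^ 2 * ‖w + (t : ℂ) • P w‖ ^ 2 := by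
      nlinarith [norm_nonneg (w + (t : ℂ) • P w), norm_nonneg P,
        mul_pos (by positivity : (0:ℝ) < 1 + t) hcpos]
    rw [hxnorm] at hb2
    have htc : t * ‖P w‖ ^ 2 = ‖w‖ ^ 2 := by
      rw [ht]; field_simp
    have h5 : t ^ 2 * ‖P w‖ ^ 2 = t * ‖w‖ ^ 2 := by
      rw [← htc]; ring
    have e1 : ((1 + t) * ‖P w‖) ^ 2 = (1 + t) * (‖P w‖ ^ 2 + t * ‖P w‖ ^ 2) := by ring
    rw [e1, htc, h5] at hb2
    have e3 : ‖P‖ ^ 2 * (‖w‖ ^ 2 + t * ‖w‖ ^ 2) = (1 + t) * (‖P‖ ^ 2 * ‖w‖ ^ 2) := by ring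
    rw [e3] at hb2
    have := le_of_mul_le_mul_left hb2 (by positivity : (0:ℝ) < 1 + t)
    linarith

/-- If `u ⊥ ker P*` then `Pu = u`. -/
lemma fixed (hP : P ∘L P = P) (u : H) (hu : u ∈ ((adjoint P).ker)ᗮ) :
    P u = u := by
  have h : ∀ z : H, ⟪z, u - P u⟫ = 0 := by
    intro z
    have hmem : z - adjoint P z ∈ (adjoint P).ker := by
      rw [LinearMap.mem_ker]
      have hadj : adjoint P ∘L adjoint P = adjoint P := by
        rw [← adjoint_comp, hP]
      have h2 : adjoint P (adjoint P z) = adjoint P z := DFunLike.congr_fun hadj z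
      show adjoint P (z - adjoint P z) = 0
      rw [map_sub, h2, sub_self]
    have h0 := hu _ hmem
    calc ⟪z, u - P u⟫ = ⟪z, u⟫ - ⟪z, P u⟫ := inner_sub_right _ _ _
    _ = ⟪z, u⟫ - ⟪adjoint P z, u⟫ := by rw [adjoint_inner_left]
    _ = ⟪z - adjoint P z, u⟫ := (inner_sub_left _ _ _).symm
    _ = 0 := h0
  have h2 := h (u - P u)
  rw [inner_self_eq_zero, sub_eq_zero] at h2
  exact h2.symm

/-- `‖Bx‖ ≤ ‖P‖ ‖x‖`. -/
lemma B_le (hP : P ∘L P = P) (hP0 : P ≠ 0) (x : H) :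
    ‖(P + adjoint P - 1) x‖ ≤ ‖P‖ * ‖x‖ := by
  set K : Submodule ℂ H := (adjoint P).ker with hK
  have hKclosed : IsClosed (K : Set H) := isClosed_ker (adjoint P)
  have : CompleteSpace K := hKclosed.completeSpace_coe
  obtain ⟨w, u, hwK, huK, hxuw⟩ :
      ∃ w u : H, w ∈ K ∧ u ∈ Kᗮ ∧ x = u + w :=
    ⟨K.starProjection x, x - K.starProjection x, SetLike.coe_mem _,
      K.sub_starProjection_mem_orthogonal x, by abel⟩
  have hPu : P u = u := fixed P hP u huK
  have hPw0 : adjoint P w = 0 := hwK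
  have hinner : ⟪w, u⟫ = (0 : ℂ) := (Submodule.mem_orthogonal K u).mp huK w hwK
  have hxsq : ‖x‖ ^ 2 = ‖u‖ ^ 2 + ‖w‖ ^ 2 := by
    rw [hxuw, @norm_add_sq ℂ]
    have h0 : ⟪u, w⟫ = (0 : ℂ) := by
      rw [← inner_conj_symm, hinner, map_zero]
    rw [h0]
    simp
  have hPadx : adjoint P x = adjoint P u := by
    rw [hxuw, map_add, hPw0, add_zero]
  have hQx : x - P x = w - P w := by
    rw [hxuw, map_add, hPu]
    abel
  have hI2 := I2 P hP x
  rw [hPadx, hQx] at hI2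
  have hkey := key P hP hP0 w hPw0
  have hQw : ‖w - P w‖ ^ 2 = ‖w‖ ^ 2 + ‖P w‖ ^ 2 := by
    rw [@norm_sub_sq ℂ, horth2 P w hPw0]
    simp
  have hPadu : ‖adjoint P u‖ ≤ ‖P‖ * ‖u‖ := by
    calc ‖adjoint P u‖ ≤ ‖adjoint P‖ * ‖u‖ := (adjoint P).le_opNorm u
    _ = ‖P‖ * ‖u‖ := by rw [ContinuousLinearMap.adjoint.norm_map]
  have hfinal : ‖(P + adjoint P - 1) x‖ ^ 2 ≤ ‖P‖ ^ 2 * ‖x‖ ^ 2 := by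
    rw [hI2, hQw, hxsq]
    have h1 : ‖adjoint P u‖ ^ 2 ≤ ‖P‖ ^ 2 * ‖u‖ ^ 2 := by
      nlinarith [norm_nonneg (adjoint P u), norm_nonneg u, norm_nonneg P]
    nlinarith
  have h0 : 0 ≤ ‖P‖ * ‖x‖ := by positivity
  nlinarith [norm_nonneg ((P + adjoint P - 1) x)]

/-- `‖P‖ ≤ ‖B‖`. -/
lemma le_B (hP : P ∘L P = P) (hP0 : P ≠ 0) : ‖P‖ ≤ ‖P + adjoint P - 1‖ := by
  have hBP : (P + adjoint P - 1) ∘L P = adjoint P ∘L P := by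
    ext x
    simp only [comp_apply, sub_apply, add_apply, ContinuousLinearMap.one_apply]
    rw [apply_apply P hP]
    abel
  have h1 : ‖P‖ * ‖P‖ = ‖(P + adjoint P - 1) ∘L P‖ := by
    rw [hBP, norm_adjoint_comp_self]
  have h2 : ‖(P + adjoint P - 1) ∘L P‖ ≤ ‖P + adjoint P - 1‖ * ‖P‖ :=
    opNorm_comp_le _ _
  have hpos : 0 < ‖P‖ := norm_pos_iff.mpr hP0
  nlinarith

lemma normB (hP : P ∘L P = P) (hP0 : P ≠ 0) : ‖P + adjoint P - 1‖ = ‖P‖ := by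
  refine le_antisymm ?_ (le_B P hP hP0)
  exact opNorm_le_bound _ (norm_nonneg P) (B_le P hP hP0)

end NormSkewAux

open NormSkewAux in
theorem norm_skew_part_of_projection {H : Type*} [NormedAddCommGroup H]
    [InnerProductSpace ℂ H] [CompleteSpace H] (P : H →L[ℂ] H)
    (hP : P ∘L P = P) (hP0 : P ≠ 0) :
    ‖P - ContinuousLinearMap.adjoint P‖ ^ 2 = ‖P‖ ^ 2 - 1 := by
  have hp1 : 1 ≤ ‖P‖ := one_le_norm P hP hP0
  have hB : ‖P + ContinuousLinearMap.adjoint P - 1‖ = ‖P‖ := normB P hP hP0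
  have hub : ‖P - ContinuousLinearMap.adjoint P‖ ^ 2 ≤ ‖P‖ ^ 2 - 1 := by
    have hsq : (0:ℝ) ≤ ‖P‖ ^ 2 - 1 := by nlinarith
    have hAle : ‖P - ContinuousLinearMap.adjoint P‖ ≤ Real.sqrt (‖P‖ ^ 2 - 1) := by
      apply ContinuousLinearMap.opNorm_le_bound _ (Real.sqrt_nonneg _)
      intro x
      have hI1 := I1 P hP x
      have hBx : ‖(P + ContinuousLinearMap.adjoint P - 1) x‖ ≤ ‖P‖ * ‖x‖ :=
        B_le P hP hP0 x
      have h1 : ‖(P - ContinuousLinearMap.adjoint P) x‖ ^ 2 ≤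
          (Real.sqrt (‖P‖ ^ 2 - 1) * ‖x‖) ^ 2 := by
        rw [mul_pow, Real.sq_sqrt hsq]
        nlinarith [norm_nonneg ((P + ContinuousLinearMap.adjoint P - 1) x),
          norm_nonneg x, norm_nonneg P]
      have h2 : (0:ℝ) ≤ Real.sqrt (‖P‖ ^ 2 - 1) * ‖x‖ := by positivity
      nlinarith [norm_nonneg ((P - ContinuousLinearMap.adjoint P) x)]
    have hs := Real.sq_sqrt hsq
    nlinarith [norm_nonneg (P - ContinuousLinearMap.adjoint P),
      Real.sqrt_nonneg (‖P‖ ^ 2 - 1)]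
  have hlb : ‖P‖ ^ 2 ≤ 1 + ‖P - ContinuousLinearMap.adjoint P‖ ^ 2 := by
    have hsq : (0:ℝ) ≤ 1 + ‖P - ContinuousLinearMap.adjoint P‖ ^ 2 := by positivity
    have hBle : ‖P + ContinuousLinearMap.adjoint P - 1‖ ≤
        Real.sqrt (1 + ‖P - ContinuousLinearMap.adjoint P‖ ^ 2) := by
      apply ContinuousLinearMap.opNorm_le_bound _ (Real.sqrt_nonneg _)
      intro x
      have hI1 := I1 P hP x
      have hAx : ‖(P - ContinuousLinearMap.adjoint P) x‖ ≤
          ‖P - ContinuousLinearMap.adjoint P‖ * ‖x‖ :=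
        (P - ContinuousLinearMap.adjoint P).le_opNorm x
      have h1 : ‖(P + ContinuousLinearMap.adjoint P - 1) x‖ ^ 2 ≤
          (Real.sqrt (1 + ‖P - ContinuousLinearMap.adjoint P‖ ^ 2) * ‖x‖) ^ 2 := by
        rw [mul_pow, Real.sq_sqrt hsq]
        nlinarith [norm_nonneg ((P - ContinuousLinearMap.adjoint P) x), norm_nonneg x,
          norm_nonneg (P - ContinuousLinearMap.adjoint P)]
      have h2 : (0:ℝ) ≤ Real.sqrt (1 + ‖P - ContinuousLinearMap.adjoint P‖ ^ 2) * ‖x‖ := by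
        positivity
      nlinarith [norm_nonneg ((P + ContinuousLinearMap.adjoint P - 1) x)]
    rw [hB] at hBle
    have hs := Real.sq_sqrt hsq
    nlinarith [Real.sqrt_nonneg (1 + ‖P - ContinuousLinearMap.adjoint P‖ ^ 2)]
  linarith
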